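/- For jointly distributed discrete random variables M_1, Y_1-vector, W-vector with M_1 uniform of entropy N R_1 and Fano condition H(M_1 | Y_1^N) ≤ Nε, and with (M_1, W_{n+1}^N) independent of W_n for each n: N R_1 ≤ Σ_{n=1}^N [ I(V_{1,n} ; Y_{1,n}) - I(V_{1,n} ; W_n) ] + Nε, where V_{1,n} = (M_1, W_{n+1}^N, Y_1^{n-1}). -/

import Mathlib

open scoped BigOperators

/-- A probability mass function on a finite sample space. -/
def IsPMF {Ω : Type} [Fintype Ω] (p : Ω → ℝ) : Prop :=
  (∀ ω, 0 ≤ p ω) ∧ ∑ ω, p ω = 1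

/-- Probability that the discrete random variable `X` takes the value `x`. -/
noncomputable def pm {Ω : Type} [Fintype Ω] (p : Ω → ℝ) {α : Type} [DecidableEq α]
    (X : Ω → α) (x : α) : ℝ :=
  ∑ ω, if X ω = x then p ω else 0

/-- Shannon entropy (base 2) of a discrete random variable `X`. -/
noncomputable def ent {Ω : Type} [Fintype Ω] (p : Ω → ℝ) {α : Type} [Fintype α] [DecidableEq α]
    (X : Ω → α) : ℝ :=
  -∑ x, pm p X x * Real.logb 2 (pm p X x)

/-- Conditional Shannon entropy `H(X | Y)`. -/
noncomputable def cent {Ω : Type} [Fintype Ω] (p : Ω → ℝ) {α β : Type}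
    [Fintype α] [DecidableEq α] [Fintype β] [DecidableEq β]
    (X : Ω → α) (Y : Ω → β) : ℝ :=
  ent p (fun ω => (X ω, Y ω)) - ent p Y

/-- Mutual information `I(X ; Y)`. -/
noncomputable def mi {Ω : Type} [Fintype Ω] (p : Ω → ℝ) {α β : Type}
    [Fintype α] [DecidableEq α] [Fintype β] [DecidableEq β]
    (X : Ω → α) (Y : Ω → β) : ℝ :=
  ent p X - cent p X Y

/-- Conditional mutual information `I(X ; Y | Z) = H(X|Z) - H(X|Z,Y)`. -/
noncomputable def cmi {Ω : Type} [Fintype Ω] (p : Ω → ℝ) {α β γ : Type}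
    [Fintype α] [DecidableEq α] [Fintype β] [DecidableEq β] [Fintype γ] [DecidableEq γ]
    (X : Ω → α) (Y : Ω → β) (Z : Ω → γ) : ℝ :=
  cent p X Z - cent p X (fun ω => (Z ω, Y ω))

/-- Independence of two discrete random variables. -/
def IndepRV {Ω : Type} [Fintype Ω] (p : Ω → ℝ) {α β : Type} [DecidableEq α] [DecidableEq β]
    (X : Ω → α) (Y : Ω → β) : Prop :=
  ∀ x y, pm p (fun ω => (X ω, Y ω)) (x, y) = pm p X x * pm p Y y

/-- The strict prefix `(Y_1, …, Y_{n-1})` of a sequence of random variables. -/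
def pfx {Ω : Type} {N : ℕ} {α : Type} (Y : Fin N → Ω → α) (n : Fin N) :
    Ω → ({i : Fin N // i < n} → α) :=
  fun ω i => Y i.1 ω

/-- The strict suffix `(Y_{n+1}, …, Y_N)` of a sequence of random variables. -/
def sfx {Ω : Type} {N : ℕ} {α : Type} (Y : Fin N → Ω → α) (n : Fin N) :
    Ω → ({i : Fin N // n < i} → α) :=
  fun ω i => Y i.1 ω

set_option linter.unusedSectionVars false

section Lemmas
variable {Ω : Type} [Fintype Ω] (p : Ω → ℝ)

lemma pm_nonneg {α : Type} [DecidableEq α] (hp : IsPMF p) (X : Ω → α) (x : α) :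
    0 ≤ pm p X x :=
  Finset.sum_nonneg fun ω _ => by by_cases h : X ω = x <;> simp [h, hp.1 ω]

lemma pm_sum {α : Type} [Fintype α] [DecidableEq α] (hp : IsPMF p) (X : Ω → α) :
    ∑ x, pm p X x = 1 := by
  unfold pm
  rw [Finset.sum_comm]
  simpa using hp.2

lemma ent_comp_inj {α β : Type} [Fintype α] [DecidableEq α] [Fintype β] [DecidableEq β]
    (X : Ω → α) (e : α → β) (he : Function.Injective e) :
    ent p (fun ω => e (X ω)) = ent p X := by
  unfold ent
  congr 1
  have hpm : ∀ x, pm p (fun ω => e (X ω)) (e x) = pm p X x := fun x =>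
    Finset.sum_congr rfl fun ω _ => by simp [he.eq_iff]
  rw [← Finset.sum_subset (Finset.subset_univ (Finset.univ.image e))]
  · rw [Finset.sum_image (fun a _ b _ h => he h)]
    exact Finset.sum_congr rfl fun x _ => by rw [hpm]
  · intro y _ hy
    have : pm p (fun ω => e (X ω)) y = 0 := by
      apply Finset.sum_eq_zero; intro ω _
      rw [if_neg]; intro h; exact hy (Finset.mem_image.mpr ⟨X ω, Finset.mem_univ _, h⟩)
    rw [this]; simp

lemma ent_eq_of_inj {α β : Type} [Fintype α] [DecidableEq α] [Fintype β] [DecidableEq β]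
    (X : Ω → α) (Z : Ω → β) (e : α → β) (he : Function.Injective e)
    (h : ∀ ω, e (X ω) = Z ω) : ent p Z = ent p X := by
  have hZ : Z = fun ω => e (X ω) := funext fun ω => (h ω).symm
  rw [hZ]; exact ent_comp_inj p X e he

lemma ent_const {α : Type} [Fintype α] [DecidableEq α] (hp : IsPMF p) (c : α) :
    ent p (fun _ => c) = 0 := by
  unfold ent
  have hpm : ∀ x, pm p (fun _ : Ω => c) x = if c = x then 1 else 0 := by
    intro x
    unfold pm
    by_cases h : c = x <;> simp [h, hp.2]
  rw [show ∑ x, pm p (fun _ : Ω => c) x * Real.logb 2 (pm p (fun _ : Ω => c) x)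
      = ∑ x, (if c = x then (1:ℝ) * Real.logb 2 1 else 0) from
    Finset.sum_congr rfl fun x _ => by rw [hpm x]; by_cases h : c = x <;> simp [h]]
  simp
end Lemmas

section Lemmas2
variable {Ω : Type} [Fintype Ω] (p : Ω → ℝ)
variable {α β : Type} [Fintype α] [DecidableEq α] [Fintype β] [DecidableEq β]

lemma pm_marg_left (X : Ω → α) (Y : Ω → β) (x : α) :
    ∑ y, pm p (fun ω => (X ω, Y ω)) (x, y) = pm p X x := by
  unfold pm
  rw [Finset.sum_comm]
  apply Finset.sum_congr rfl
  intro ω _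
  by_cases h : X ω = x
  · simp [h, Prod.ext_iff, Finset.sum_ite_eq']
  · simp [h, Prod.ext_iff]

lemma pm_marg_right (X : Ω → α) (Y : Ω → β) (y : β) :
    ∑ x, pm p (fun ω => (X ω, Y ω)) (x, y) = pm p Y y := by
  unfold pm
  rw [Finset.sum_comm]
  apply Finset.sum_congr rfl
  intro ω _
  by_cases h : Y ω = y
  · simp [h, Prod.ext_iff, Finset.sum_ite_eq']
  · simp [h, Prod.ext_iff]

lemma pm_pair_le_left (hp : IsPMF p) (X : Ω → α) (Y : Ω → β) (x : α) (y : β) :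
    pm p (fun ω => (X ω, Y ω)) (x, y) ≤ pm p X x := by
  apply Finset.sum_le_sum
  intro ω _
  by_cases h2 : (X ω, Y ω) = (x, y)
  · rw [if_pos h2, if_pos (by rw [Prod.ext_iff] at h2; exact h2.1)]
  · rw [if_neg h2]
    split_ifs with h
    exacts [hp.1 ω, le_rfl]

lemma pm_pair_le_right (hp : IsPMF p) (X : Ω → α) (Y : Ω → β) (x : α) (y : β) :
    pm p (fun ω => (X ω, Y ω)) (x, y) ≤ pm p Y y := by
  apply Finset.sum_le_sum
  intro ω _
  by_cases h2 : (X ω, Y ω) = (x, y)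
  · rw [if_pos h2, if_pos (by rw [Prod.ext_iff] at h2; exact h2.2)]
  · rw [if_neg h2]
    split_ifs with h
    exacts [hp.1 ω, le_rfl]

lemma ent_pair_le (hp : IsPMF p) (X : Ω → α) (Y : Ω → β) :
    ent p (fun ω => (X ω, Y ω)) ≤ ent p X + ent p Y := by
  set q : α → β → ℝ := fun x y => pm p (fun ω => (X ω, Y ω)) (x, y) with hq
  set a : α → ℝ := fun x => pm p X x with ha
  set b : β → ℝ := fun y => pm p Y y with hb
  have hA : ent p X = -∑ x, ∑ y, q x y * Real.logb 2 (a x) := by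
    unfold ent
    congr 1
    apply Finset.sum_congr rfl
    intro x _
    rw [← Finset.sum_mul, pm_marg_left]
  have hB : ent p Y = -∑ x, ∑ y, q x y * Real.logb 2 (b y) := by
    unfold ent
    congr 1
    rw [Finset.sum_comm]
    apply Finset.sum_congr rfl
    intro y _
    rw [← Finset.sum_mul, pm_marg_right]
  have hAB : ent p (fun ω => (X ω, Y ω)) = -∑ x, ∑ y, q x y * Real.logb 2 (q x y) := by
    unfold ent
    rw [Fintype.sum_prod_type]
  have key : ∑ x, ∑ y, q x y * (Real.logb 2 (a x) + Real.logb 2 (b y) - Real.logb 2 (q x y))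
      ≤ 0 := by
    have hstep : ∀ x y, q x y * (Real.logb 2 (a x) + Real.logb 2 (b y) - Real.logb 2 (q x y))
        ≤ (a x * b y - q x y) / Real.log 2 := by
      intro x y
      have hq0 : 0 ≤ q x y := pm_nonneg p hp _ _
      have ha0 : 0 ≤ a x := pm_nonneg p hp _ _
      have hb0 : 0 ≤ b y := pm_nonneg p hp _ _
      have hlog2 : (0:ℝ) < Real.log 2 := Real.log_pos (by norm_num)
      rcases eq_or_lt_of_le hq0 with hq0' | hq0'
      · rw [← hq0']
        simp
        positivity
      · have hqa : q x y ≤ a x := pm_pair_le_left p hp X Y x y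
        have hqb : q x y ≤ b y := pm_pair_le_right p hp X Y x y
        have ha' : 0 < a x := lt_of_lt_of_le hq0' hqa
        have hb' : 0 < b y := lt_of_lt_of_le hq0' hqb
        have hlb : Real.logb 2 (a x) + Real.logb 2 (b y) - Real.logb 2 (q x y)
            = Real.log (a x * b y / q x y) / Real.log 2 := by
          rw [Real.log_div (by positivity) (ne_of_gt hq0'), Real.log_mul (ne_of_gt ha') (ne_of_gt hb')]
          unfold Real.logb
          ring
        rw [hlb]
        have hle : Real.log (a x * b y / q x y) ≤ a x * b y / q x y - 1 :=
          Real.log_le_sub_one_of_pos (by positivity)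
        calc q x y * (Real.log (a x * b y / q x y) / Real.log 2)
            ≤ q x y * ((a x * b y / q x y - 1) / Real.log 2) := by
              apply mul_le_mul_of_nonneg_left _ hq0
              exact div_le_div_of_nonneg_right hle hlog2.le
          _ = (a x * b y - q x y) / Real.log 2 := by
              field_simp
    calc ∑ x, ∑ y, q x y * (Real.logb 2 (a x) + Real.logb 2 (b y) - Real.logb 2 (q x y))
        ≤ ∑ x, ∑ y, (a x * b y - q x y) / Real.log 2 := by
          apply Finset.sum_le_sum; intro x _
          apply Finset.sum_le_sum; intro y _
          exact hstep x y
      _ = ((∑ x, a x) * (∑ y, b y) - ∑ x, ∑ y, q x y) / Real.log 2 := by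
          rw [Finset.sum_mul_sum]
          simp only [← Finset.sum_sub_distrib, ← Finset.sum_div]
      _ = 0 := by
          rw [pm_sum p hp X, pm_sum p hp Y]
          have : ∑ x, ∑ y, q x y = 1 := by
            rw [← Fintype.sum_prod_type]
            exact pm_sum p hp _
          rw [this]; simp
  rw [hA, hB, hAB]
  have expand : ∑ x, ∑ y, q x y * (Real.logb 2 (a x) + Real.logb 2 (b y) - Real.logb 2 (q x y))
      = (∑ x, ∑ y, q x y * Real.logb 2 (a x)) + (∑ x, ∑ y, q x y * Real.logb 2 (b y))
        - (∑ x, ∑ y, q x y * Real.logb 2 (q x y)) := by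
    simp only [mul_sub, mul_add, Finset.sum_sub_distrib, Finset.sum_add_distrib]
  linarith [key, expand]

lemma indep_ent (hp : IsPMF p) (X : Ω → α) (Y : Ω → β)
    (h : ∀ x y, pm p (fun ω => (X ω, Y ω)) (x, y) = pm p X x * pm p Y y) :
    ent p (fun ω => (X ω, Y ω)) = ent p X + ent p Y := by
  unfold ent
  rw [Fintype.sum_prod_type]
  have step : ∀ x y, pm p (fun ω => (X ω, Y ω)) (x, y) *
      Real.logb 2 (pm p (fun ω => (X ω, Y ω)) (x, y))
      = pm p X x * pm p Y y * Real.logb 2 (pm p X x)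
        + pm p X x * pm p Y y * Real.logb 2 (pm p Y y) := by
    intro x y
    rw [h x y]
    by_cases hx : pm p X x = 0
    · simp [hx]
    by_cases hy : pm p Y y = 0
    · simp [hy]
    rw [Real.logb_mul hx hy]
    ring
  rw [show ∑ x, ∑ y, pm p (fun ω => (X ω, Y ω)) (x, y) *
      Real.logb 2 (pm p (fun ω => (X ω, Y ω)) (x, y))
      = ∑ x, ∑ y, (pm p X x * pm p Y y * Real.logb 2 (pm p X x)
        + pm p X x * pm p Y y * Real.logb 2 (pm p Y y)) from
    Finset.sum_congr rfl fun x _ => Finset.sum_congr rfl fun y _ => step x y]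
  have h1 : ∑ x, ∑ y, pm p X x * pm p Y y * Real.logb 2 (pm p X x)
      = ∑ x, pm p X x * Real.logb 2 (pm p X x) := by
    apply Finset.sum_congr rfl; intro x _
    rw [show ∀ f : β → ℝ, ∑ y, pm p X x * f y * Real.logb 2 (pm p X x)
      = (pm p X x * Real.logb 2 (pm p X x)) * ∑ y, f y from fun f => by
        rw [Finset.mul_sum]; apply Finset.sum_congr rfl; intro y _; ring]
    rw [pm_sum p hp Y]; ring
  have h2 : ∑ x, ∑ y, pm p X x * pm p Y y * Real.logb 2 (pm p Y y)
      = ∑ y, pm p Y y * Real.logb 2 (pm p Y y) := by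
    rw [Finset.sum_comm]
    apply Finset.sum_congr rfl; intro y _
    rw [show ∀ f : α → ℝ, ∑ x, f x * pm p Y y * Real.logb 2 (pm p Y y)
      = (pm p Y y * Real.logb 2 (pm p Y y)) * ∑ x, f x from fun f => by
        rw [Finset.mul_sum]; apply Finset.sum_congr rfl; intro x _; ring]
    rw [pm_sum p hp X]; ring
  rw [show (∑ x, ∑ y, (pm p X x * pm p Y y * Real.logb 2 (pm p X x)
        + pm p X x * pm p Y y * Real.logb 2 (pm p Y y)))
    = (∑ x, ∑ y, pm p X x * pm p Y y * Real.logb 2 (pm p X x))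
      + ∑ x, ∑ y, pm p X x * pm p Y y * Real.logb 2 (pm p Y y) from by
    rw [← Finset.sum_add_distrib]
    exact Finset.sum_congr rfl fun x _ => Finset.sum_add_distrib]
  rw [h1, h2]; ring
end Lemmas2

-- ℕ-indexed prefix/suffix families
def PfxN {Ω : Type} {N : ℕ} {α : Type} (Y : Fin N → Ω → α) (k : ℕ) :
    Ω → ({i : Fin N // (i : ℕ) < k} → α) :=
  fun ω i => Y i.1 ω

def SfxN {Ω : Type} {N : ℕ} {σ : Type} (W : Fin N → Ω → σ) (k : ℕ) :
    Ω → ({i : Fin N // k ≤ (i : ℕ)} → σ) :=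
  fun ω i => W i.1 ω

-- extension of a prefix by one symbol
def extY {N : ℕ} {α : Type} (n : Fin N) (f : {i : Fin N // (i : ℕ) < (n : ℕ)} → α) (y : α) :
    {i : Fin N // (i : ℕ) < (n : ℕ) + 1} → α :=
  fun i => if h : (i.1 : ℕ) < (n : ℕ) then f ⟨i.1, h⟩ else y

lemma extY_inj {N : ℕ} {α : Type} (n : Fin N) :
    Function.Injective (fun fy : ({i : Fin N // (i : ℕ) < (n : ℕ)} → α) × α =>
      extY n fy.1 fy.2) := by
  rintro ⟨f, y⟩ ⟨g, z⟩ h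
  simp only [Prod.mk.injEq]
  constructor
  · funext i
    have h1 := congrFun h ⟨i.1, Nat.lt_succ_of_lt i.2⟩
    simpa [extY, i.2] using h1
  · have h2 := congrFun h ⟨n, Nat.lt_succ_self _⟩
    simpa [extY] using h2

lemma extY_spec {Ω : Type} {N : ℕ} {α : Type} (Y : Fin N → Ω → α) (n : Fin N) (ω : Ω) :
    extY n (PfxN Y (n : ℕ) ω) (Y n ω) = PfxN Y ((n : ℕ) + 1) ω := by
  funext i
  by_cases h : (i.1 : ℕ) < (n : ℕ)
  · simp [extY, PfxN, h]
  · have hin : i.1 = n :=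
      Fin.ext (Nat.le_antisymm (Nat.lt_succ_iff.mp i.2) (Nat.not_lt.mp h))
    simp [extY, PfxN, h, hin]

-- extension of a suffix by one symbol
def extW {N : ℕ} {σ : Type} (n : Fin N) (w : σ) (g : {i : Fin N // (n : ℕ) + 1 ≤ (i : ℕ)} → σ) :
    {i : Fin N // (n : ℕ) ≤ (i : ℕ)} → σ :=
  fun i => if h : (n : ℕ) + 1 ≤ (i.1 : ℕ) then g ⟨i.1, h⟩ else w

lemma extW_inj {N : ℕ} {σ : Type} (n : Fin N) :
    Function.Injective (fun wg : σ × ({i : Fin N // (n : ℕ) + 1 ≤ (i : ℕ)} → σ) =>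
      extW n wg.1 wg.2) := by
  rintro ⟨w, g⟩ ⟨v, f⟩ h
  simp only [Prod.mk.injEq]
  constructor
  · have h1 := congrFun h ⟨n, le_refl _⟩
    simpa [extW] using h1
  · funext i
    have h2 := congrFun h ⟨i.1, Nat.le_of_succ_le i.2⟩
    simpa [extW, i.2] using h2

lemma extW_spec {Ω : Type} {N : ℕ} {σ : Type} (W : Fin N → Ω → σ) (n : Fin N) (ω : Ω) :
    extW n (W n ω) (SfxN W ((n : ℕ) + 1) ω) = SfxN W (n : ℕ) ω := by
  funext i
  by_cases h : (n : ℕ) + 1 ≤ (i.1 : ℕ)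
  · simp [extW, SfxN, h]
  · have hin : i.1 = n := Fin.ext (Nat.le_antisymm (Nat.not_lt.mp (fun hc => h hc)) i.2)
    simp [extW, SfxN, h, hin]

set_option synthInstance.maxSize 2000 in
theorem classI_single_rate_converse {Ω : Type} [Fintype Ω] {N : ℕ} {μ α σ : Type}
    [Fintype μ] [DecidableEq μ] [Fintype α] [DecidableEq α] [Fintype σ] [DecidableEq σ]
    (p : Ω → ℝ) (hp : IsPMF p) (M₁ : Ω → μ) (Y : Fin N → Ω → α) (W : Fin N → Ω → σ)
    (R₁ ε : ℝ)
    (hent : ent p M₁ = (N : ℝ) * R₁)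
    (hfano : cent p M₁ (fun ω => (fun i : Fin N => Y i ω)) ≤ (N : ℝ) * ε)
    (hind : ∀ n : Fin N, IndepRV p (fun ω => (M₁ ω, sfx W n ω)) (W n)) :
    (N : ℝ) * R₁ ≤
      (∑ n : Fin N,
        (mi p (fun ω => (M₁ ω, sfx W n ω, pfx Y n ω)) (Y n) -
         mi p (fun ω => (M₁ ω, sfx W n ω, pfx Y n ω)) (W n))) + (N : ℝ) * ε := by
  set F : ℕ → ℝ := fun k =>
    ent p (fun ω => (M₁ ω, PfxN Y k ω)) - ent p (PfxN Y k) with hF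
  set G : ℕ → ℝ := fun k =>
    ent p (fun ω => (M₁ ω, PfxN Y k ω)) + ent p (fun ω => (M₁ ω, SfxN W k ω))
      - ent p (fun ω => (M₁ ω, (PfxN Y k ω, SfxN W k ω))) - ent p M₁ with hG
  set IY : Fin N → ℝ := fun n =>
    ent p (PfxN Y (n : ℕ)) + ent p (Y n) - ent p (PfxN Y ((n : ℕ) + 1)) with hIY
  -- per-index key identity
  have key : ∀ n : Fin N,
      mi p (fun ω => (M₁ ω, sfx W n ω, pfx Y n ω)) (Y n) -
        mi p (fun ω => (M₁ ω, sfx W n ω, pfx Y n ω)) (W n)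
      = IY n + (F (n : ℕ) - F ((n : ℕ) + 1)) + (G ((n : ℕ) + 1) - G (n : ℕ)) := by
    intro n
    have h2 : ent p (fun ω => (M₁ ω, (PfxN Y ((n : ℕ) + 1) ω, SfxN W ((n : ℕ) + 1) ω)))
        = ent p (fun ω => ((M₁ ω, sfx W n ω, pfx Y n ω), Y n ω)) := by
      refine ent_eq_of_inj p
        (fun ω => ((M₁ ω, sfx W n ω, pfx Y n ω), Y n ω))
        (fun ω => (M₁ ω, (PfxN Y ((n : ℕ) + 1) ω, SfxN W ((n : ℕ) + 1) ω)))
        (fun q => (q.1.1, (extY n q.1.2.2 q.2, q.1.2.1))) ?_ ?_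
      · rintro ⟨⟨m, s, f⟩, y⟩ ⟨⟨m', s', f'⟩, y'⟩ hq
        simp only [Prod.mk.injEq] at hq
        obtain ⟨hm, hE, hs⟩ := hq
        have hfy := extY_inj n (a₁ := (f, y)) (a₂ := (f', y')) hE
        simp only [Prod.mk.injEq] at hfy
        obtain ⟨hf, hy⟩ := hfy
        subst hm; subst hs; subst hf; subst hy; rfl
      · intro ω
        show (M₁ ω, (extY n (PfxN Y (n : ℕ) ω) (Y n ω), SfxN W ((n : ℕ) + 1) ω)) = _
        rw [extY_spec]
    have h3 : ent p (fun ω => (M₁ ω, (PfxN Y (n : ℕ) ω, SfxN W (n : ℕ) ω)))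
        = ent p (fun ω => ((M₁ ω, sfx W n ω, pfx Y n ω), W n ω)) := by
      refine ent_eq_of_inj p
        (fun ω => ((M₁ ω, sfx W n ω, pfx Y n ω), W n ω))
        (fun ω => (M₁ ω, (PfxN Y (n : ℕ) ω, SfxN W (n : ℕ) ω)))
        (fun q => (q.1.1, (q.1.2.2, extW n q.2 q.1.2.1))) ?_ ?_
      · rintro ⟨⟨m, s, f⟩, y⟩ ⟨⟨m', s', f'⟩, y'⟩ hq
        simp only [Prod.mk.injEq] at hq
        obtain ⟨hm, hf, hE⟩ := hq
        have hws := extW_inj n (a₁ := (y, s)) (a₂ := (y', s')) hE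
        simp only [Prod.mk.injEq] at hws
        obtain ⟨hy, hs⟩ := hws
        subst hm; subst hs; subst hf; subst hy; rfl
      · intro ω
        show (M₁ ω, (PfxN Y (n : ℕ) ω, extW n (W n ω) (SfxN W ((n : ℕ) + 1) ω))) = _
        rw [extW_spec]
    have h4a : ent p (fun ω => (M₁ ω, SfxN W (n : ℕ) ω))
        = ent p (fun ω => ((M₁ ω, sfx W n ω), W n ω)) := by
      refine ent_eq_of_inj p
        (fun ω => ((M₁ ω, sfx W n ω), W n ω))
        (fun ω => (M₁ ω, SfxN W (n : ℕ) ω))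
        (fun q => (q.1.1, extW n q.2 q.1.2)) ?_ ?_
      · rintro ⟨⟨m, s⟩, y⟩ ⟨⟨m', s'⟩, y'⟩ hq
        simp only [Prod.mk.injEq] at hq
        obtain ⟨hm, hE⟩ := hq
        have hws := extW_inj n (a₁ := (y, s)) (a₂ := (y', s')) hE
        simp only [Prod.mk.injEq] at hws
        obtain ⟨hy, hs⟩ := hws
        subst hm; subst hs; subst hy; rfl
      · intro ω
        show (M₁ ω, extW n (W n ω) (SfxN W ((n : ℕ) + 1) ω)) = _
        rw [extW_spec]
    have h4b : ent p (fun ω => ((M₁ ω, sfx W n ω), W n ω))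
        = ent p (fun ω => (M₁ ω, SfxN W ((n : ℕ) + 1) ω)) + ent p (W n) :=
      indep_ent p hp _ _ (hind n)
    have h4 : ent p (fun ω => (M₁ ω, SfxN W (n : ℕ) ω))
        = ent p (fun ω => (M₁ ω, SfxN W ((n : ℕ) + 1) ω)) + ent p (W n) :=
      h4a.trans h4b
    simp only [mi, cent, hF, hG, hIY]
    linarith [h2, h3, h4]
  -- telescoping sums
  have t1 : ∑ n : Fin N, (F (n : ℕ) - F ((n : ℕ) + 1)) = F 0 - F N :=
    (Fin.sum_univ_eq_sum_range (fun k => F k - F (k + 1)) N).trans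
      (Finset.sum_range_sub' F N)
  have t2 : ∑ n : Fin N, (G ((n : ℕ) + 1) - G (n : ℕ)) = G N - G 0 :=
    (Fin.sum_univ_eq_sum_range (fun k => G (k + 1) - G k) N).trans
      (Finset.sum_range_sub G N)
  have hsum : (∑ n : Fin N,
        (mi p (fun ω => (M₁ ω, sfx W n ω, pfx Y n ω)) (Y n) -
         mi p (fun ω => (M₁ ω, sfx W n ω, pfx Y n ω)) (W n)))
      = (∑ n : Fin N, IY n) + (F 0 - F N) + (G N - G 0) := by
    rw [Finset.sum_congr rfl (fun n _ => key n), Finset.sum_add_distrib,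
      Finset.sum_add_distrib, t1, t2]
  -- nonnegativity of the IY terms
  have hIY0 : 0 ≤ ∑ n : Fin N, IY n := by
    apply Finset.sum_nonneg
    intro n _
    have hpair := ent_pair_le p hp (PfxN Y (n : ℕ)) (Y n)
    have hrel : ent p (PfxN Y ((n : ℕ) + 1))
        = ent p (fun ω => (PfxN Y (n : ℕ) ω, Y n ω)) :=
      ent_eq_of_inj p (fun ω => (PfxN Y (n : ℕ) ω, Y n ω)) (PfxN Y ((n : ℕ) + 1))
        (fun q => extY n q.1 q.2) (extY_inj n) (fun ω => extY_spec Y n ω)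
    simp only [hIY]
    linarith [hpair, hrel]
  -- boundary values
  have hA0 : ent p (fun ω => (M₁ ω, PfxN Y 0 ω)) = ent p M₁ := by
    refine ent_eq_of_inj p M₁ _
      (fun m => (m, fun i => absurd i.2 (Nat.not_lt_zero _))) ?_ ?_
    · intro a b h
      exact congrArg Prod.fst h
    · intro ω
      exact Prod.ext rfl (funext fun i => absurd i.2 (Nat.not_lt_zero _))
  have hB0 : ent p (PfxN Y 0) = 0 := by
    have hconst : PfxN Y (N := N) 0
        = fun _ => (fun i => absurd i.2 (Nat.not_lt_zero _)) :=
      funext fun ω => funext fun i => absurd i.2 (Nat.not_lt_zero _)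
    rw [hconst]
    exact ent_const p hp _
  have hAN : ent p (fun ω => (M₁ ω, PfxN Y N ω))
      = ent p (fun ω => (M₁ ω, fun i : Fin N => Y i ω)) := by
    refine ent_eq_of_inj p
      (fun ω => (M₁ ω, fun i : Fin N => Y i ω))
      (fun ω => (M₁ ω, PfxN Y N ω))
      (fun q => (q.1, fun i => q.2 i.1)) ?_ ?_
    · rintro ⟨m, g⟩ ⟨m', g'⟩ hq
      simp only [Prod.mk.injEq] at hq
      obtain ⟨hm, hg⟩ := hq
      subst hm
      exact Prod.ext rfl (funext fun i => congrFun hg ⟨i, i.isLt⟩)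
    · intro ω; rfl
  have hBN : ent p (PfxN Y N) = ent p (fun ω => fun i : Fin N => Y i ω) := by
    refine ent_eq_of_inj p
      (fun ω => fun i : Fin N => Y i ω) (PfxN Y N)
      (fun g i => g i.1) ?_ ?_
    · intro g g' hg
      exact funext fun i => congrFun hg ⟨i, i.isLt⟩
    · intro ω; rfl
  have hDN : ent p (fun ω => (M₁ ω, SfxN W N ω)) = ent p M₁ := by
    refine ent_eq_of_inj p M₁ _
      (fun m => (m, fun i => absurd i.1.isLt (Nat.not_lt.mpr i.2))) ?_ ?_
    · intro a b h
      exact congrArg Prod.fst h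
    · intro ω
      exact Prod.ext rfl (funext fun i => absurd i.1.isLt (Nat.not_lt.mpr i.2))
  have hCNN : ent p (fun ω => (M₁ ω, (PfxN Y N ω, SfxN W N ω)))
      = ent p (fun ω => (M₁ ω, PfxN Y N ω)) := by
    refine ent_eq_of_inj p (fun ω => (M₁ ω, PfxN Y N ω)) _
      (fun q => (q.1, (q.2, fun i => absurd i.1.isLt (Nat.not_lt.mpr i.2)))) ?_ ?_
    · rintro ⟨m, f⟩ ⟨m', f'⟩ hq
      simp only [Prod.mk.injEq] at hq
      obtain ⟨hm, hf, -⟩ := hq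
      subst hm; subst hf; rfl
    · intro ω
      exact Prod.ext rfl (Prod.ext rfl
        (funext fun i => absurd i.1.isLt (Nat.not_lt.mpr i.2)))
  have hC00 : ent p (fun ω => (M₁ ω, (PfxN Y 0 ω, SfxN W 0 ω)))
      = ent p (fun ω => (M₁ ω, SfxN W 0 ω)) := by
    refine ent_eq_of_inj p (fun ω => (M₁ ω, SfxN W 0 ω)) _
      (fun q => (q.1, (fun i => absurd i.2 (Nat.not_lt_zero _), q.2))) ?_ ?_
    · rintro ⟨m, s⟩ ⟨m', s'⟩ hq
      simp only [Prod.mk.injEq] at hq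
      obtain ⟨hm, -, hs⟩ := hq
      subst hm; subst hs; rfl
    · intro ω
      exact Prod.ext rfl (Prod.ext
        (funext fun i => absurd i.2 (Nat.not_lt_zero _)) rfl)
  have hF0 : F 0 = ent p M₁ := by
    simp only [hF]
    rw [hA0, hB0]
    ring
  have hFN : F N ≤ (N : ℝ) * ε := by
    simp only [hF]
    rw [hAN, hBN]
    exact hfano
  have hG0 : G 0 = 0 := by
    simp only [hG]
    rw [hA0, hC00]
    ring
  have hGN : G N = 0 := by
    simp only [hG]
    rw [hCNN, hDN]
    ring
  linarith [hsum, hIY0, hF0, hFN, hG0, hGN, hent]
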